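/- arXiv:1502.03382 — 2 statements merged into one kernel-verified Lean document; each statement's English description precedes it below -/
import Mathlib

section
/- The function b₀(x) = −(1/(2·ζ(x)^{1/2}))·( x(x²−6)/(12(x²−1)^{3/2}) + 5/(24·ζ(x)^{3/2}) ) tends to −(9/140)·2^{−2/3} as x → 1 from the right, where ζ(x) = ( (3/4)·( x·√(x²−1) − arcosh x ) )^{2/3}. -/
open Real Filter

/-- The inverse hyperbolic cosine, `arcosh x = log (x + √(x² - 1))`. -/
noncomputable def arcosh (x : ℝ) : ℝ := Real.log (x + Real.sqrt (x ^ 2 - 1))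

/-- The variable `ζ(x) = ((3/4)(x√(x²-1) - arcosh x))^{2/3}` for `x ≥ 1`. -/
noncomputable def zeta (x : ℝ) : ℝ :=
  ((3 / 4) * (x * Real.sqrt (x ^ 2 - 1) - _root_.arcosh x)) ^ ((2 : ℝ) / 3)

/-- The coefficient function
`b₀(x) = -(1/(2ζ^{1/2}))·(x(x²-6)/(12(x²-1)^{3/2}) + 5/(24ζ^{3/2}))`. -/
noncomputable def b0 (x : ℝ) : ℝ :=
  -(1 / (2 * zeta x ^ ((1 : ℝ) / 2))) *
    (x * (x ^ 2 - 6) / (12 * (x ^ 2 - 1) ^ ((3 : ℝ) / 2)) +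
      5 / (24 * zeta x ^ ((3 : ℝ) / 2)))

section Aux
set_option maxHeartbeats 1000000

lemma sqrt_taylor {u : ℝ} (h0 : 0 ≤ u) (h1 : u ≤ 1) :
    1 + u/2 - u^2/8 ≤ Real.sqrt (1+u) ∧ Real.sqrt (1+u) ≤ 1 + u/2 - u^2/8 + u^3/16 := by
  have hs2 : Real.sqrt (1+u) ^ 2 = 1 + u := Real.sq_sqrt (by linarith)
  have hs0 : 0 ≤ Real.sqrt (1+u) := Real.sqrt_nonneg _
  constructor
  · nlinarith [sq_nonneg (Real.sqrt (1+u) - (1 + u/2 - u^2/8)), sq_nonneg u, sq_nonneg (u*u), sq_nonneg (u*u*u)]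
  · nlinarith [sq_nonneg (Real.sqrt (1+u) - (1 + u/2 - u^2/8 + u^3/16)), sq_nonneg u, sq_nonneg (u*u), sq_nonneg (u*u*u)]

lemma core_ineq {t : ℝ} (h0 : 0 ≤ t) (h1 : t ≤ 2) :
    3/2 + 3/8*t - 3/64*t^2 ≤ (3/2) * Real.sqrt (1+t/2) ∧
    (3/2) * Real.sqrt (1+t/2) ≤ 3/2 + 3/8*t - 3/64*t^2 + 3/256*t^3 := by
  obtain ⟨hl, hu⟩ := sqrt_taylor (u := t/2) (by linarith) (by linarith)
  constructor <;> nlinarith [hl, hu]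

lemma sqrt_factor {x : ℝ} (h1 : 1 ≤ x) :
    Real.sqrt (x^2-1) = Real.sqrt 2 * Real.sqrt (x-1) * Real.sqrt (1+(x-1)/2) := by
  have h : x^2-1 = (2*(x-1))*(1+(x-1)/2) := by ring
  rw [h, Real.sqrt_mul (by linarith), Real.sqrt_mul (by norm_num)]

-- rpow to sqrt conversions
lemma tp_half {t : ℝ} : t ^ ((1:ℝ)/2) = Real.sqrt t := (Real.sqrt_eq_rpow t).symm
lemma tp_32 {t : ℝ} (ht : 0 ≤ t) : t ^ ((3:ℝ)/2) = Real.sqrt t * t := by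
  rcases eq_or_lt_of_le ht with h | h
  · simp [← h]
  · rw [show (3:ℝ)/2 = 1/2 + 1 by norm_num, Real.rpow_add h, Real.rpow_one, tp_half]
lemma tp_52 {t : ℝ} (ht : 0 ≤ t) : t ^ ((5:ℝ)/2) = Real.sqrt t * t^2 := by
  rcases eq_or_lt_of_le ht with h | h
  · simp [← h]
  · rw [show (5:ℝ)/2 = 1/2 + 2 by norm_num, Real.rpow_add h, tp_half,
      show (2:ℝ) = ((2:ℕ):ℝ) by norm_num, Real.rpow_natCast]
lemma tp_72 {t : ℝ} (ht : 0 ≤ t) : t ^ ((7:ℝ)/2) = Real.sqrt t * t^3 := by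
  rcases eq_or_lt_of_le ht with h | h
  · simp [← h]
  · rw [show (7:ℝ)/2 = 1/2 + 3 by norm_num, Real.rpow_add h, tp_half,
      show (3:ℝ) = ((3:ℕ):ℝ) by norm_num, Real.rpow_natCast]
lemma tp_92 {t : ℝ} (ht : 0 ≤ t) : t ^ ((9:ℝ)/2) = Real.sqrt t * t^4 := by
  rcases eq_or_lt_of_le ht with h | h
  · simp [← h]
  · rw [show (9:ℝ)/2 = 1/2 + 4 by norm_num, Real.rpow_add h, tp_half,
      show (4:ℝ) = ((4:ℕ):ℝ) by norm_num, Real.rpow_natCast]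

noncomputable def gg (x : ℝ) : ℝ := (3/4) * (x * Real.sqrt (x ^ 2 - 1) - _root_.arcosh x)
noncomputable def GG (x : ℝ) : ℝ :=
  Real.sqrt 2 * ((x-1) ^ ((3:ℝ)/2) + 3/20*(x-1) ^ ((5:ℝ)/2) - 3/224*(x-1) ^ ((7:ℝ)/2))
noncomputable def UU (x : ℝ) : ℝ := Real.sqrt 2/384 * (x-1) ^ ((9:ℝ)/2)

lemma hasDerivAt_gg {x : ℝ} (hx : 1 < x) :
    HasDerivAt gg ((3/2) * Real.sqrt (x ^ 2 - 1)) x := by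
  have h1 : (0:ℝ) < x ^ 2 - 1 := by nlinarith
  set s := Real.sqrt (x ^ 2 - 1) with hs
  have hs2 : s ^ 2 = x ^ 2 - 1 := Real.sq_sqrt h1.le
  have hspos : 0 < s := Real.sqrt_pos.mpr h1
  have hinner : HasDerivAt (fun y : ℝ => y ^ 2 - 1) (2 * x) x := by
    simpa using (hasDerivAt_pow 2 x).sub_const 1
  have hsqrt : HasDerivAt (fun y : ℝ => Real.sqrt (y ^ 2 - 1)) (x / s) x := by
    have := (Real.hasDerivAt_sqrt (ne_of_gt h1)).comp x hinner
    refine this.congr_deriv ?_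
    field_simp
    ring
  have hxs : HasDerivAt (fun y : ℝ => y * Real.sqrt (y ^ 2 - 1)) (1 * s + x * (x / s)) x :=
    (hasDerivAt_id x).mul hsqrt
  have hpos : 0 < x + s := by positivity
  have hin : HasDerivAt (fun y : ℝ => y + Real.sqrt (y ^ 2 - 1)) (1 + x / s) x :=
    (hasDerivAt_id x).add hsqrt
  have ha : HasDerivAt _root_.arcosh ((1 + x / s) / (x + s)) x := by
    have := hin.log (ne_of_gt hpos)
    exact this
  have h := ((hxs.sub ha).const_mul (3/4 : ℝ))
  refine h.congr_deriv ?_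
  field_simp
  linear_combination (-2*(s+x)) * hs2

lemma hasDerivAt_tp {p : ℝ} (hp : 1 ≤ p) (x : ℝ) :
    HasDerivAt (fun y : ℝ => (y-1) ^ p) (p * (x-1) ^ (p-1)) x := by
  have h := Real.hasDerivAt_rpow_const (x := x-1) (p := p) (Or.inr hp)
  have h2 : HasDerivAt (fun y : ℝ => y - 1) 1 x := (hasDerivAt_id x).sub_const 1
  simpa [Function.comp_def] using h.comp x h2

lemma hasDerivAt_GG (x : ℝ) :
    HasDerivAt GG (Real.sqrt 2 * ((3/2)*(x-1) ^ ((1:ℝ)/2) + 3/8*(x-1) ^ ((3:ℝ)/2)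
      - 3/64*(x-1) ^ ((5:ℝ)/2))) x := by
  have h3 := hasDerivAt_tp (p := (3:ℝ)/2) (by norm_num) x
  have h5 := hasDerivAt_tp (p := (5:ℝ)/2) (by norm_num) x
  have h7 := hasDerivAt_tp (p := (7:ℝ)/2) (by norm_num) x
  have := (((h3.add (h5.const_mul (3/20:ℝ))).sub (h7.const_mul (3/224:ℝ))).const_mul
    (Real.sqrt 2))
  refine this.congr_deriv ?_
  norm_num
  ring

lemma hasDerivAt_UU (x : ℝ) :
    HasDerivAt UU (3*Real.sqrt 2/256 * (x-1) ^ ((7:ℝ)/2)) x := by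
  have h9 := hasDerivAt_tp (p := (9:ℝ)/2) (by norm_num) x
  have := h9.const_mul (Real.sqrt 2/384 : ℝ)
  refine this.congr_deriv ?_
  norm_num
  ring

-- derivative comparison on (1,2)
lemma deriv_lower {x : ℝ} (h1 : 1 < x) (h2 : x < 2) :
    Real.sqrt 2 * ((3/2)*(x-1) ^ ((1:ℝ)/2) + 3/8*(x-1) ^ ((3:ℝ)/2)
      - 3/64*(x-1) ^ ((5:ℝ)/2)) ≤ (3/2) * Real.sqrt (x^2-1) := by
  have ht : (0:ℝ) ≤ x - 1 := by linarith
  have hc := (core_ineq (t := x-1) ht (by linarith)).1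
  rw [sqrt_factor h1.le, tp_half, tp_32 ht, tp_52 ht]
  have hst : 0 ≤ Real.sqrt (x-1) := Real.sqrt_nonneg _
  have hs2 : 0 ≤ Real.sqrt 2 := Real.sqrt_nonneg _
  nlinarith [mul_le_mul_of_nonneg_left hc (mul_nonneg hs2 hst)]

lemma deriv_upper {x : ℝ} (h1 : 1 < x) (h2 : x < 2) :
    (3/2) * Real.sqrt (x^2-1) ≤ Real.sqrt 2 * ((3/2)*(x-1) ^ ((1:ℝ)/2) + 3/8*(x-1) ^ ((3:ℝ)/2)
      - 3/64*(x-1) ^ ((5:ℝ)/2)) + 3*Real.sqrt 2/256 * (x-1) ^ ((7:ℝ)/2) := by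
  have ht : (0:ℝ) ≤ x - 1 := by linarith
  have hc := (core_ineq (t := x-1) ht (by linarith)).2
  rw [sqrt_factor h1.le, tp_half, tp_32 ht, tp_52 ht, tp_72 ht]
  have hst : 0 ≤ Real.sqrt (x-1) := Real.sqrt_nonneg _
  have hs2 : 0 ≤ Real.sqrt 2 := Real.sqrt_nonneg _
  nlinarith [mul_le_mul_of_nonneg_left hc (mul_nonneg hs2 hst)]

lemma contGG : Continuous GG :=
  continuous_iff_continuousAt.mpr fun x => (hasDerivAt_GG x).continuousAt
lemma contUU : Continuous UU :=
  continuous_iff_continuousAt.mpr fun x => (hasDerivAt_UU x).continuousAt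

lemma cont_gg : ContinuousOn gg (Set.Icc 1 2) := by
  have c1 : Continuous fun x : ℝ => x + Real.sqrt (x^2-1) := by continuity
  have hpos : ∀ x ∈ Set.Icc (1:ℝ) 2, x + Real.sqrt (x^2-1) ≠ 0 := by
    intro x hx
    have := Real.sqrt_nonneg (x^2-1)
    have h1 := hx.1
    positivity
  have hlog : ContinuousOn (fun x : ℝ => Real.log (x + Real.sqrt (x^2-1))) (Set.Icc 1 2) :=
    ContinuousOn.log c1.continuousOn hpos
  have c2 : Continuous fun x : ℝ => x * Real.sqrt (x^2-1) := by continuity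
  have : ContinuousOn (fun x : ℝ => (3/4) * (x * Real.sqrt (x^2-1)
      - Real.log (x + Real.sqrt (x^2-1)))) (Set.Icc 1 2) :=
    continuousOn_const.mul (c2.continuousOn.sub hlog)
  convert this using 2 with x
  rfl

lemma gg_one : gg 1 = 0 := by norm_num [gg, _root_.arcosh]
lemma GG_one : GG 1 = 0 := by simp [GG]
lemma UU_one : UU 1 = 0 := by simp [UU]

lemma gg_ge {x : ℝ} (hx : x ∈ Set.Icc (1:ℝ) 2) : GG x ≤ gg x := by
  have hmono : MonotoneOn (fun y => gg y - GG y) (Set.Icc 1 2) := by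
    apply monotoneOn_of_deriv_nonneg (convex_Icc 1 2) (cont_gg.sub contGG.continuousOn)
    · rw [interior_Icc]
      intro y hy
      exact ((hasDerivAt_gg hy.1).sub (hasDerivAt_GG y)).differentiableAt.differentiableWithinAt
    · rw [interior_Icc]
      intro y hy
      rw [((hasDerivAt_gg hy.1).sub (hasDerivAt_GG y)).deriv]
      have := deriv_lower hy.1 hy.2
      linarith
  have h0 := hmono (Set.left_mem_Icc.mpr (by norm_num)) hx hx.1
  simp only [gg_one, GG_one] at h0
  linarith

lemma gg_le {x : ℝ} (hx : x ∈ Set.Icc (1:ℝ) 2) : gg x ≤ GG x + UU x := by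
  have hmono : MonotoneOn (fun y => GG y + UU y - gg y) (Set.Icc 1 2) := by
    apply monotoneOn_of_deriv_nonneg (convex_Icc 1 2)
      ((contGG.continuousOn.add contUU.continuousOn).sub cont_gg)
    · rw [interior_Icc]
      intro y hy
      exact (((hasDerivAt_GG y).add (hasDerivAt_UU y)).sub
        (hasDerivAt_gg hy.1)).differentiableAt.differentiableWithinAt
    · rw [interior_Icc]
      intro y hy
      rw [(((hasDerivAt_GG y).add (hasDerivAt_UU y)).sub (hasDerivAt_gg hy.1)).deriv]
      have := deriv_upper hy.1 hy.2
      linarith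
  have h0 := hmono (Set.left_mem_Icc.mpr (by norm_num)) hx hx.1
  simp only [gg_one, GG_one, UU_one] at h0
  linarith

noncomputable def gam (x : ℝ) : ℝ := gg x / (Real.sqrt 2 * (x-1) ^ ((3:ℝ)/2))
noncomputable def bet (x : ℝ) : ℝ := ((x+1)/2) ^ ((3:ℝ)/2)

lemma gam_bounds {x : ℝ} (h1 : 1 < x) (h2 : x < 2) :
    0 ≤ gam x - (1 + 3*(x-1)/20 - 3*(x-1)^2/224) ∧
    gam x - (1 + 3*(x-1)/20 - 3*(x-1)^2/224) ≤ (x-1)^3/384 := by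
  have ht : (0:ℝ) < x - 1 := by linarith
  set t := x - 1 with htdef
  have hd : 0 < Real.sqrt 2 * (Real.sqrt t * t) := by positivity
  have hGG : GG x = (Real.sqrt 2 * (Real.sqrt t * t)) * (1 + 3*t/20 - 3*t^2/224) := by
    rw [GG, ← htdef, tp_32 ht.le, tp_52 ht.le, tp_72 ht.le]; ring
  have hUU : UU x = (Real.sqrt 2 * (Real.sqrt t * t)) * (t^3/384) := by
    rw [UU, ← htdef, tp_92 ht.le]; ring
  have hgam : gam x = gg x / (Real.sqrt 2 * (Real.sqrt t * t)) := by
    rw [gam, ← htdef, tp_32 ht.le]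
  have hge := gg_ge (Set.mem_Icc.mpr ⟨h1.le, h2.le⟩)
  have hle := gg_le (Set.mem_Icc.mpr ⟨h1.le, h2.le⟩)
  have key : gam x - (1 + 3*t/20 - 3*t^2/224) = (gg x - GG x) / (Real.sqrt 2 * (Real.sqrt t * t)) := by
    rw [hgam, hGG]
    field_simp
  constructor
  · rw [key]
    exact div_nonneg (by linarith) hd.le
  · rw [key]
    rw [div_le_iff₀ hd]
    have : (Real.sqrt 2 * (Real.sqrt t * t)) * (t^3/384) = UU x := hUU.symm
    nlinarith [hle, hGG]

lemma gam_pos {x : ℝ} (h1 : 1 < x) (h2 : x < 2) : 0 < gam x := by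
  have h := (gam_bounds h1 h2).1
  nlinarith [h1, h2]

lemma gg_pos {x : ℝ} (h1 : 1 < x) (h2 : x < 2) : 0 < gg x := by
  have hgam := gam_pos h1 h2
  have ht : (0:ℝ) < x - 1 := by linarith
  have hd : 0 < Real.sqrt 2 * (x-1) ^ ((3:ℝ)/2) := by
    have := Real.rpow_pos_of_pos ht ((3:ℝ)/2)
    positivity
  have : gam x = gg x / (Real.sqrt 2 * (x-1) ^ ((3:ℝ)/2)) := rfl
  rw [this, div_pos_iff] at hgam
  rcases hgam with ⟨h, _⟩ | ⟨_, h⟩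
  · exact h
  · linarith

lemma bet_bounds {x : ℝ} (h1 : 1 < x) (h2 : x < 2) :
    0 ≤ bet x - (1 + 3*(x-1)/4 + 3*(x-1)^2/32 - (x-1)^3/64) ∧
    bet x - (1 + 3*(x-1)/4 + 3*(x-1)^2/32 - (x-1)^3/64) ≤ 3*(x-1)^3/256 := by
  have hu0 : (0:ℝ) ≤ (x-1)/2 := by linarith
  have hu1 : (x-1)/2 ≤ 1 := by linarith
  have hb : (0:ℝ) ≤ (x+1)/2 := by linarith
  have hbet : bet x = Real.sqrt ((x+1)/2) * ((x+1)/2) := by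
    rw [bet, tp_32 hb]
  have hs : (x+1)/2 = 1 + (x-1)/2 := by ring
  obtain ⟨hl, hu⟩ := sqrt_taylor hu0 hu1
  rw [hbet, hs]
  constructor
  · nlinarith [hl]
  · nlinarith [hu, hu0]

lemma b0_eq {x : ℝ} (h1 : 1 < x) (h2 : x < 2) :
    b0 x = -((2*(x*(x^2-6))*gg x + 5*(x^2-1) ^ ((3:ℝ)/2)) /
      (48 * gg x ^ ((4:ℝ)/3) * (x^2-1) ^ ((3:ℝ)/2))) := by
  have hgg := gg_pos h1 h2
  have hz : zeta x = gg x ^ ((2:ℝ)/3) := rfl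
  have hz12 : zeta x ^ ((1:ℝ)/2) = gg x ^ ((1:ℝ)/3) := by
    rw [hz, ← Real.rpow_mul hgg.le]; norm_num
  have hz32 : zeta x ^ ((3:ℝ)/2) = gg x := by
    rw [hz, ← Real.rpow_mul hgg.le]; norm_num
  have h43 : gg x ^ ((4:ℝ)/3) = gg x * gg x ^ ((1:ℝ)/3) := by
    rw [show (4:ℝ)/3 = 1 + 1/3 by norm_num, Real.rpow_add hgg, Real.rpow_one]
  have hwpos : (0:ℝ) < (x^2-1) ^ ((3:ℝ)/2) := Real.rpow_pos_of_pos (by nlinarith) _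
  have hupos : (0:ℝ) < gg x ^ ((1:ℝ)/3) := Real.rpow_pos_of_pos hgg _
  rw [show b0 x = -(1 / (2 * zeta x ^ ((1 : ℝ) / 2))) *
    (x * (x ^ 2 - 6) / (12 * (x ^ 2 - 1) ^ ((3 : ℝ) / 2)) +
      5 / (24 * zeta x ^ ((3 : ℝ) / 2))) from rfl, hz12, hz32, h43]
  have hx21 : (x ^ 2 - 1 : ℝ) = x^2 - 1 := rfl
  field_simp
  ring

lemma h232 : (2:ℝ) ^ ((3:ℝ)/2) = 2 * Real.sqrt 2 := by
  rw [show (3:ℝ)/2 = 1 + 1/2 by norm_num, Real.rpow_add (by norm_num : (0:ℝ) < 2),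
    Real.rpow_one, ← Real.sqrt_eq_rpow]

lemma w_eq {x : ℝ} (h1 : 1 < x) :
    (x^2-1) ^ ((3:ℝ)/2) = (x+1) ^ ((3:ℝ)/2) * (x-1) ^ ((3:ℝ)/2) := by
  rw [show x^2-1 = (x+1)*(x-1) by ring, Real.mul_rpow (by linarith) (by linarith)]

lemma xp1_eq {x : ℝ} (h1 : 1 < x) : (x+1) ^ ((3:ℝ)/2) = 2 * Real.sqrt 2 * bet x := by
  rw [bet, show x+1 = 2*((x+1)/2) by ring,
    Real.mul_rpow (by norm_num) (by linarith), h232]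
  congr 1
  ring

lemma gg_fact {x : ℝ} (h1 : 1 < x) : gg x = Real.sqrt 2 * gam x * (x-1) ^ ((3:ℝ)/2) := by
  have ht : (0:ℝ) < x - 1 := by linarith
  have hp : (0:ℝ) < (x-1) ^ ((3:ℝ)/2) := Real.rpow_pos_of_pos ht _
  have hs : (0:ℝ) < Real.sqrt 2 := by positivity
  rw [gam]
  field_simp

lemma rpow_two' {t : ℝ} : t ^ ((2:ℝ)) = t ^ 2 := by
  rw [show ((2:ℝ)) = ((2:ℕ):ℝ) by norm_num, Real.rpow_natCast]

lemma f1_eq {x : ℝ} (h1 : 1 < x) (h2 : x < 2) :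
    (2*(x*(x^2-6))*gg x + 5*(x^2-1) ^ ((3:ℝ)/2)) / (x-1) ^ ((7:ℝ)/2)
      = Real.sqrt 2 * ((2*(x*(x^2-6))*gam x + 10*bet x)/(x-1)^2) := by
  have ht : (0:ℝ) < x - 1 := by linarith
  have h72 : (x-1) ^ ((7:ℝ)/2) = (x-1) ^ ((3:ℝ)/2) * (x-1)^2 := by
    rw [show (7:ℝ)/2 = 3/2 + 2 by norm_num, Real.rpow_add ht, rpow_two']
  have hp : (0:ℝ) < (x-1) ^ ((3:ℝ)/2) := Real.rpow_pos_of_pos ht _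
  rw [w_eq h1, xp1_eq h1, gg_fact h1, h72]
  field_simp
  ring

lemma f2_eq {x : ℝ} (h1 : 1 < x) (h2 : x < 2) :
    gg x ^ ((4:ℝ)/3) / (x-1)^2 = (Real.sqrt 2 * gam x) ^ ((4:ℝ)/3) := by
  have ht : (0:ℝ) < x - 1 := by linarith
  have hp : (0:ℝ) < (x-1) ^ ((3:ℝ)/2) := Real.rpow_pos_of_pos ht _
  have hgg := gg_pos h1 h2
  have key : Real.sqrt 2 * gam x = gg x / (x-1) ^ ((3:ℝ)/2) := by
    rw [gam]
    field_simp
  rw [key, Real.div_rpow hgg.le hp.le, ← Real.rpow_mul ht.le]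
  norm_num [rpow_two']

lemma f3_eq {x : ℝ} (h1 : 1 < x) :
    (x^2-1) ^ ((3:ℝ)/2) / (x-1) ^ ((3:ℝ)/2) = (x+1) ^ ((3:ℝ)/2) := by
  have ht : (0:ℝ) < x - 1 := by linarith
  have hp : (0:ℝ) < (x-1) ^ ((3:ℝ)/2) := Real.rpow_pos_of_pos ht _
  rw [w_eq h1]
  field_simp

lemma hIoo : Set.Ioo (1:ℝ) 2 ∈ nhdsWithin (1:ℝ) (Set.Ioi 1) :=
  Ioo_mem_nhdsGT_of_mem (Set.mem_Ico.mpr ⟨le_refl 1, by norm_num⟩)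

lemma tendsto_gam : Tendsto gam (nhdsWithin 1 (Set.Ioi 1)) (nhds 1) := by
  apply tendsto_of_tendsto_of_tendsto_of_le_of_le'
    (g := fun x : ℝ => 1 + 3*(x-1)/20 - 3*(x-1)^2/224)
    (h := fun x : ℝ => 1 + 3*(x-1)/20 - 3*(x-1)^2/224 + (x-1)^3/384)
  · exact ((Continuous.tendsto' (by continuity) 1 1 (by norm_num))).mono_left nhdsWithin_le_nhds
  · exact ((Continuous.tendsto' (by continuity) 1 1 (by norm_num))).mono_left nhdsWithin_le_nhds
  · filter_upwards [hIoo] with x hx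
    have := (gam_bounds hx.1 hx.2).1
    linarith
  · filter_upwards [hIoo] with x hx
    have := (gam_bounds hx.1 hx.2).2
    linarith

lemma tendsto_A : Tendsto (fun x : ℝ => (2*(x*(x^2-6))*gam x + 10*bet x)/(x-1)^2)
    (nhdsWithin 1 (Set.Ioi 1)) (nhds (216/35)) := by
  have hR : Continuous (fun x : ℝ => 216/35 + 3163/1120*(x-1) + 123/560*(x-1)^2 - 3/112*(x-1)^3) := by
    continuity
  apply tendsto_of_tendsto_of_tendsto_of_le_of_le'
    (g := fun x : ℝ => (216/35 + 3163/1120*(x-1) + 123/560*(x-1)^2 - 3/112*(x-1)^3) - (x-1))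
    (h := fun x : ℝ => (216/35 + 3163/1120*(x-1) + 123/560*(x-1)^2 - 3/112*(x-1)^3) + (x-1))
  · exact ((Continuous.tendsto' (by continuity) 1 (216/35) (by norm_num))).mono_left nhdsWithin_le_nhds
  · exact ((Continuous.tendsto' (by continuity) 1 (216/35) (by norm_num))).mono_left nhdsWithin_le_nhds
  · filter_upwards [hIoo] with x hx
    obtain ⟨hg1, hg2⟩ := gam_bounds hx.1 hx.2
    obtain ⟨hb1, hb2⟩ := bet_bounds hx.1 hx.2
    have h1 := hx.1; have h2 := hx.2
    have ht : (0:ℝ) < x - 1 := by linarith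
    have ht1 : x - 1 < 1 := by linarith
    have ht2 : (0:ℝ) < (x-1)^2 := by positivity
    have hP1 : 2*(x*(x^2-6)) ≤ 0 := by nlinarith
    have hP2 : -20 ≤ 2*(x*(x^2-6)) := by nlinarith
    have hNm : -((x-1)*(x-1)^2) ≤ 2*(x*(x^2-6))*(gam x - (1 + 3*(x-1)/20 - 3*(x-1)^2/224))
        + 10*(bet x - (1 + 3*(x-1)/4 + 3*(x-1)^2/32 - (x-1)^3/64)) := by
      have e1 : (-20:ℝ) * (gam x - (1 + 3*(x-1)/20 - 3*(x-1)^2/224))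
          ≤ 2*(x*(x^2-6)) * (gam x - (1 + 3*(x-1)/20 - 3*(x-1)^2/224)) :=
        mul_le_mul_of_nonneg_right hP2 hg1
      have ht3 : (x-1)*(x-1)^2 = (x-1)^3 := by ring
      have htp : (0:ℝ) < (x-1)^3 := by positivity
      nlinarith [e1, hg2, hb1]
    have hkey : (2*(x*(x^2-6))*gam x + 10*bet x)/(x-1)^2
        - (216/35 + 3163/1120*(x-1) + 123/560*(x-1)^2 - 3/112*(x-1)^3)
        = (2*(x*(x^2-6))*(gam x - (1 + 3*(x-1)/20 - 3*(x-1)^2/224))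
          + 10*(bet x - (1 + 3*(x-1)/4 + 3*(x-1)^2/32 - (x-1)^3/64)))/(x-1)^2 := by
      field_simp
      ring
    have : -(x-1) ≤ (2*(x*(x^2-6))*gam x + 10*bet x)/(x-1)^2
        - (216/35 + 3163/1120*(x-1) + 123/560*(x-1)^2 - 3/112*(x-1)^3) := by
      rw [hkey, le_div_iff₀ ht2]
      nlinarith [hNm]
    linarith
  · filter_upwards [hIoo] with x hx
    obtain ⟨hg1, hg2⟩ := gam_bounds hx.1 hx.2
    obtain ⟨hb1, hb2⟩ := bet_bounds hx.1 hx.2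
    have h1 := hx.1; have h2 := hx.2
    have ht : (0:ℝ) < x - 1 := by linarith
    have ht1 : x - 1 < 1 := by linarith
    have ht2 : (0:ℝ) < (x-1)^2 := by positivity
    have hP1 : 2*(x*(x^2-6)) ≤ 0 := by nlinarith
    have hNm : 2*(x*(x^2-6))*(gam x - (1 + 3*(x-1)/20 - 3*(x-1)^2/224))
        + 10*(bet x - (1 + 3*(x-1)/4 + 3*(x-1)^2/32 - (x-1)^3/64)) ≤ (x-1)*(x-1)^2 := by
      have e2 : 2*(x*(x^2-6)) * (gam x - (1 + 3*(x-1)/20 - 3*(x-1)^2/224)) ≤ 0 :=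
        mul_nonpos_of_nonpos_of_nonneg hP1 hg1
      have ht3 : (x-1)*(x-1)^2 = (x-1)^3 := by ring
      have htp : (0:ℝ) < (x-1)^3 := by positivity
      nlinarith [e2, hb2]
    have hkey : (2*(x*(x^2-6))*gam x + 10*bet x)/(x-1)^2
        - (216/35 + 3163/1120*(x-1) + 123/560*(x-1)^2 - 3/112*(x-1)^3)
        = (2*(x*(x^2-6))*(gam x - (1 + 3*(x-1)/20 - 3*(x-1)^2/224))
          + 10*(bet x - (1 + 3*(x-1)/4 + 3*(x-1)^2/32 - (x-1)^3/64)))/(x-1)^2 := by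
      field_simp
      ring
    have : (2*(x*(x^2-6))*gam x + 10*bet x)/(x-1)^2
        - (216/35 + 3163/1120*(x-1) + 123/560*(x-1)^2 - 3/112*(x-1)^3) ≤ (x-1) := by
      rw [hkey, div_le_iff₀ ht2]
      nlinarith [hNm]
    linarith

lemma t72 {x : ℝ} (ht : (0:ℝ) < x-1) :
    (x-1) ^ ((7:ℝ)/2) = (x-1) ^ ((3:ℝ)/2) * (x-1)^2 := by
  rw [show (7:ℝ)/2 = 3/2 + 2 by norm_num, Real.rpow_add ht, rpow_two']


end Aux

set_option maxHeartbeats 1000000 in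
theorem tendsto_b0_one :
    Tendsto b0 (nhdsWithin 1 (Set.Ioi 1))
      (nhds (-(9 / 140) * (2 : ℝ) ^ (-(2 : ℝ) / 3))) := by
  have T1 : Tendsto (fun x : ℝ => (2*(x*(x^2-6))*gg x + 5*(x^2-1) ^ ((3:ℝ)/2)) / (x-1) ^ ((7:ℝ)/2))
      (nhdsWithin 1 (Set.Ioi 1)) (nhds (Real.sqrt 2 * (216/35))) := by
    apply Tendsto.congr' _ (tendsto_A.const_mul (Real.sqrt 2))
    filter_upwards [hIoo] with x hx
    exact (f1_eq hx.1 hx.2).symm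
  have T2 : Tendsto (fun x : ℝ => gg x ^ ((4:ℝ)/3) / (x-1)^2)
      (nhdsWithin 1 (Set.Ioi 1)) (nhds ((2:ℝ) ^ ((2:ℝ)/3))) := by
    have h : Tendsto (fun x : ℝ => Real.sqrt 2 * gam x) (nhdsWithin 1 (Set.Ioi 1))
        (nhds (Real.sqrt 2 * 1)) := tendsto_gam.const_mul (Real.sqrt 2)
    have h2 := h.rpow_const (p := (4:ℝ)/3) (Or.inl (by positivity))
    have hval : (Real.sqrt 2 * 1) ^ ((4:ℝ)/3) = (2:ℝ) ^ ((2:ℝ)/3) := by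
      rw [mul_one, Real.sqrt_eq_rpow, ← Real.rpow_mul (by norm_num : (0:ℝ) ≤ 2)]
      norm_num
    rw [hval] at h2
    apply Tendsto.congr' _ h2
    filter_upwards [hIoo] with x hx
    exact (f2_eq hx.1 hx.2).symm
  have T3 : Tendsto (fun x : ℝ => (x^2-1) ^ ((3:ℝ)/2) / (x-1) ^ ((3:ℝ)/2))
      (nhdsWithin 1 (Set.Ioi 1)) (nhds ((2:ℝ) ^ ((3:ℝ)/2))) := by
    have h : Tendsto (fun x : ℝ => x+1) (nhdsWithin 1 (Set.Ioi 1)) (nhds 2) :=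
      ((continuous_id.add continuous_const).tendsto' 1 2 (by norm_num)).mono_left
        nhdsWithin_le_nhds
    have h2 := h.rpow_const (p := (3:ℝ)/2) (Or.inl (by norm_num))
    apply Tendsto.congr' _ h2
    filter_upwards [hIoo] with x hx
    exact (f3_eq hx.1).symm
  have Tden : Tendsto (fun x : ℝ => 48 * (gg x ^ ((4:ℝ)/3) / (x-1)^2)
      * ((x^2-1) ^ ((3:ℝ)/2) / (x-1) ^ ((3:ℝ)/2)))
      (nhdsWithin 1 (Set.Ioi 1)) (nhds (48 * (2:ℝ) ^ ((2:ℝ)/3) * (2:ℝ) ^ ((3:ℝ)/2))) :=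
    (T2.const_mul 48).mul T3
  have hb23 : (0:ℝ) < (2:ℝ) ^ ((2:ℝ)/3) := Real.rpow_pos_of_pos (by norm_num) _
  have hb32 : (0:ℝ) < (2:ℝ) ^ ((3:ℝ)/2) := Real.rpow_pos_of_pos (by norm_num) _
  have hden_ne : 48 * (2:ℝ) ^ ((2:ℝ)/3) * (2:ℝ) ^ ((3:ℝ)/2) ≠ 0 := by positivity
  have Tb := ((T1.div Tden hden_ne).neg)
  have heq : (fun x : ℝ => -(((2*(x*(x^2-6))*gg x + 5*(x^2-1) ^ ((3:ℝ)/2)) / (x-1) ^ ((7:ℝ)/2))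
      / (48 * (gg x ^ ((4:ℝ)/3) / (x-1)^2)
        * ((x^2-1) ^ ((3:ℝ)/2) / (x-1) ^ ((3:ℝ)/2))))) =ᶠ[nhdsWithin 1 (Set.Ioi 1)] b0 := by
    filter_upwards [hIoo] with x hx
    have h1 := hx.1
    have h2 := hx.2
    have ht : (0:ℝ) < x - 1 := by linarith
    have hgg := gg_pos h1 h2
    have hG : (0:ℝ) < gg x ^ ((4:ℝ)/3) := Real.rpow_pos_of_pos hgg _
    have hW : (0:ℝ) < (x^2-1) ^ ((3:ℝ)/2) := Real.rpow_pos_of_pos (by nlinarith) _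
    have hp32 : (0:ℝ) < (x-1) ^ ((3:ℝ)/2) := Real.rpow_pos_of_pos ht _
    rw [b0_eq h1 h2, t72 ht]
    field_simp
  have Tfinal := Tb.congr' heq
  have hval : -(Real.sqrt 2 * (216/35) / (48 * (2:ℝ) ^ ((2:ℝ)/3) * (2:ℝ) ^ ((3:ℝ)/2)))
      = -(9/140) * (2:ℝ) ^ (-(2:ℝ)/3) := by
    rw [h232, show -(2:ℝ)/3 = -((2:ℝ)/3) by norm_num,
      Real.rpow_neg (by norm_num : (0:ℝ) ≤ 2)]
    have hs : (0:ℝ) < Real.sqrt 2 := by positivity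
    field_simp
    ring
  rw [hval] at Tfinal
  exact Tfinal
end

section
/- The function −b₀(x), where b₀(x) = −(1/(2·ζ(x)^{1/2}))·( x(x²−6)/(12(x²−1)^{3/2}) + 5/(24·ζ(x)^{3/2}) ) and ζ(x) = ( (3/4)·( x·√(x²−1) − arcosh x ) )^{2/3}, is strictly monotonically decreasing on the interval (1, ∞) and tends to 0 as x → ∞. -/
open Real Filter

set_option linter.unreachableTactic false
set_option linter.unusedTactic false

noncomputable def sF (x : ℝ) : ℝ := Real.sqrt (x ^ 2 - 1)
noncomputable def wF (x : ℝ) : ℝ := (3 / 4) * (x * sF x - _root_.arcosh x)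
noncomputable def qF (x : ℝ) : ℝ := Real.sqrt (x ^ 6 - 12 * x ^ 4 + 756 * x ^ 2 + 480)
noncomputable def uF (x : ℝ) : ℝ := wF x ^ ((1 : ℝ) / 3)
noncomputable def fF (x : ℝ) : ℝ :=
  (x ^ 3 - 6 * x) / (24 * ((x ^ 2 - 1) * sF x * uF x)) + 5 / (48 * uF x ^ 4)
noncomputable def GF (x : ℝ) : ℝ :=
  (x ^ 2 - 1) * sF x * (x ^ 3 - 6 * x + qF x) / (36 * x ^ 2 + 24) - wF x

lemma sq_sub_pos {x : ℝ} (hx : 1 < x) : (0:ℝ) < x ^ 2 - 1 := by nlinarith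

lemma sF_pos {x : ℝ} (hx : 1 < x) : 0 < sF x := Real.sqrt_pos.2 (sq_sub_pos hx)

lemma sF_sq {x : ℝ} (hx : 1 ≤ x) : sF x ^ 2 = x ^ 2 - 1 :=
  Real.sq_sqrt (by nlinarith)

lemma sF_cont : Continuous sF := by
  unfold sF; continuity

lemma qF_arg_pos (x : ℝ) : (0:ℝ) < x ^ 6 - 12 * x ^ 4 + 756 * x ^ 2 + 480 := by
  nlinarith [sq_nonneg (x^3 - 6*x), sq_nonneg x]

lemma qF_pos (x : ℝ) : 0 < qF x := Real.sqrt_pos.2 (qF_arg_pos x)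

lemma qF_sq (x : ℝ) : qF x ^ 2 = x ^ 6 - 12 * x ^ 4 + 756 * x ^ 2 + 480 :=
  Real.sq_sqrt (qF_arg_pos x).le

lemma qF_cont : Continuous qF := by
  unfold qF; continuity

lemma hasDerivAt_sF {x : ℝ} (hx : 1 < x) : HasDerivAt sF (x / sF x) x := by
  have h1 := sq_sub_pos hx
  have h := (Real.hasDerivAt_sqrt (ne_of_gt h1)).comp x
    (((hasDerivAt_pow 2 x).sub_const 1))
  refine h.congr_deriv (Eq.symm ?_)
  have hs : sF x ≠ 0 := (sF_pos hx).ne'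
  unfold sF at hs ⊢
  field_simp
  ring

lemma hasDerivAt_qF (x : ℝ) :
    HasDerivAt qF ((6 * x ^ 5 - 48 * x ^ 3 + 1512 * x) / (2 * qF x)) x := by
  have h1 := qF_arg_pos x
  have hinner : HasDerivAt (fun y : ℝ => y ^ 6 - 12 * y ^ 4 + 756 * y ^ 2 + 480)
      (6 * x ^ 5 - 48 * x ^ 3 + 1512 * x) x := by
    have h := (((hasDerivAt_pow 6 x).sub ((hasDerivAt_pow 4 x).const_mul 12)).add
      ((hasDerivAt_pow 2 x).const_mul 756)).add_const 480
    refine h.congr_deriv (Eq.symm ?_)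
    norm_num; ring
  have h := (Real.hasDerivAt_sqrt (ne_of_gt h1)).comp x hinner
  refine h.congr_deriv (Eq.symm ?_)
  unfold qF
  ring

lemma arcosh_one : _root_.arcosh 1 = 0 := by
  simp [_root_.arcosh]

lemma sF_one : sF 1 = 0 := by simp [sF]

lemma wF_one : wF 1 = 0 := by simp [wF, sF_one, arcosh_one]

lemma xs_pos {x : ℝ} (hx : 1 ≤ x) : 0 < x + Real.sqrt (x ^ 2 - 1) := by
  have : (0:ℝ) ≤ Real.sqrt (x^2-1) := Real.sqrt_nonneg _
  linarith

lemma arcosh_contOn : ContinuousOn _root_.arcosh (Set.Ici 1) := by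
  apply ContinuousOn.log
  · exact (continuous_id.add sF_cont).continuousOn
  · intro x hx
    exact (xs_pos hx).ne'

lemma hasDerivAt_arcosh {x : ℝ} (hx : 1 < x) : HasDerivAt _root_.arcosh (1 / sF x) x := by
  have hs := sF_pos hx
  have hxs := xs_pos hx.le
  have h := (Real.hasDerivAt_log hxs.ne').comp x ((hasDerivAt_id x).add (hasDerivAt_sF hx))
  refine h.congr_deriv (Eq.symm ?_)
  have h2 := sF_sq hx.le
  have hs' : sF x ≠ 0 := hs.ne'
  have hxs' : x + sF x ≠ 0 := by unfold sF at *; linarith [xs_pos hx.le]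
  show 1 / sF x = (x + sF x)⁻¹ * (1 + x / sF x)
  field_simp
  nlinarith [h2]

lemma hasDerivAt_wF {x : ℝ} (hx : 1 < x) : HasDerivAt wF ((3 / 2) * sF x) x := by
  have hs := sF_pos hx
  have h := ((((hasDerivAt_id x).mul (hasDerivAt_sF hx)).sub (_root_.hasDerivAt_arcosh hx)).const_mul (3/4))
  refine h.congr_deriv (Eq.symm ?_)
  have h2 := sF_sq hx.le
  field_simp
  simp only [id_eq]
  nlinarith [sF_sq hx.le]

lemma wF_contOn : ContinuousOn wF (Set.Ici 1) := by
  unfold wF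
  exact ContinuousOn.mul continuousOn_const ((continuous_id.mul sF_cont).continuousOn.sub arcosh_contOn)

lemma wF_pos {x : ℝ} (hx : 1 < x) : 0 < wF x := by
  have hmono : StrictMonoOn wF (Set.Ici 1) := by
    apply strictMonoOn_of_deriv_pos (convex_Ici 1) wF_contOn
    intro y hy
    rw [interior_Ici] at hy
    rw [(hasDerivAt_wF hy).deriv]
    have := sF_pos hy
    linarith
  have := hmono (Set.self_mem_Ici) (Set.mem_Ici.2 hx.le) hx
  rwa [wF_one] at this

/-- clean closed form of the derivative of `GF` -/
noncomputable def Gd (x : ℝ) : ℝ :=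
  sF x * ((144 * x ^ 9 - 1188 * x ^ 7 + 52920 * x ^ 5 + 117648 * x ^ 3 + 50976 * x) +
    (144 * x ^ 6 - 2268 * x ^ 4 - 3456 * x ^ 2 - 720) * qF x) /
    (qF x * (36 * x ^ 2 + 24) ^ 2)

lemma hasDerivAt_GF {x : ℝ} (hx : 1 < x) : HasDerivAt GF (Gd x) x := by
  have hs := sF_pos hx
  have hq := qF_pos x
  have hs2 := sF_sq hx.le
  have hq2 := qF_sq x
  have hden : (36 * x ^ 2 + 24 : ℝ) ≠ 0 := by positivity
  -- numerator : (x^2-1) * sF x * (x^3 - 6x + qF x)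
  have hNum : HasDerivAt (fun y : ℝ => (y ^ 2 - 1) * sF y * (y ^ 3 - 6 * y + qF y))
      ((2 * x * sF x + (x ^ 2 - 1) * (x / sF x)) * (x ^ 3 - 6 * x + qF x) +
        (x ^ 2 - 1) * sF x * (3 * x ^ 2 - 6 + (6 * x ^ 5 - 48 * x ^ 3 + 1512 * x) / (2 * qF x))) x := by
    have h1 : HasDerivAt (fun y : ℝ => (y ^ 2 - 1) * sF y) (2 * x * sF x + (x ^ 2 - 1) * (x / sF x)) x := by
      have := (((hasDerivAt_pow 2 x).sub_const 1).mul (hasDerivAt_sF hx))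
      refine this.congr_deriv (Eq.symm ?_); push_cast; ring
    have h2 : HasDerivAt (fun y : ℝ => y ^ 3 - 6 * y + qF y)
        (3 * x ^ 2 - 6 + (6 * x ^ 5 - 48 * x ^ 3 + 1512 * x) / (2 * qF x)) x := by
      have := ((hasDerivAt_pow 3 x).sub ((hasDerivAt_id x).const_mul 6)).add (hasDerivAt_qF x)
      refine this.congr_deriv (Eq.symm ?_); push_cast; ring
    exact h1.mul h2
  have hDen : HasDerivAt (fun y : ℝ => 36 * y ^ 2 + 24) (72 * x) x := by
    have := ((hasDerivAt_pow 2 x).const_mul 36).add_const 24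
    refine this.congr_deriv (Eq.symm ?_); push_cast; ring
  have h := (hNum.div hDen hden).sub (hasDerivAt_wF hx)
  refine h.congr_deriv (Eq.symm ?_)
  unfold Gd
  have hs' : sF x ≠ 0 := hs.ne'
  have hq' : qF x ≠ 0 := hq.ne'
  field_simp
  linear_combination ((138240) * x + (-240) * x * qF x^2 + (-288) * x^2 * qF x + (252288) * x^3 + (-384) * x^4 * qF x + (50976) * x^5 + (72) * x^6 * qF x + (-576) * x^7 + (72) * x^9) * hs2 + ((288) * x + (-216) * x^3 + (-72) * x^5) * hq2

lemma P1_pos {x : ℝ} (hx : 1 < x) :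
    0 < 144 * x ^ 9 - 1188 * x ^ 7 + 52920 * x ^ 5 + 117648 * x ^ 3 + 50976 * x := by
  nlinarith [sq_nonneg (12 * x ^ 2 - 99 / 2), sq_nonneg x, pow_pos (lt_trans one_pos hx) 5,
    pow_pos (lt_trans one_pos hx) 3, lt_trans one_pos hx]

lemma PT_pos {x : ℝ} (hx : 1 < x) :
    0 < (144 * x ^ 9 - 1188 * x ^ 7 + 52920 * x ^ 5 + 117648 * x ^ 3 + 50976 * x) +
      (144 * x ^ 6 - 2268 * x ^ 4 - 3456 * x ^ 2 - 720) * qF x := by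
  have hq := qF_pos x
  have hq2 := qF_sq x
  have hP1 := P1_pos hx
  have hy : (0:ℝ) < x - 1 := by linarith
  -- D2 = P1^2 - T^2 q^2 > 0
  have hD2 : 0 < (144 * x ^ 9 - 1188 * x ^ 7 + 52920 * x ^ 5 + 117648 * x ^ 3 + 50976 * x) ^ 2 -
      (144 * x ^ 6 - 2268 * x ^ 4 - 3456 * x ^ 2 - 720) ^ 2 * qF x ^ 2 := by
    rw [hq2]
    have key : (144 * x ^ 9 - 1188 * x ^ 7 + 52920 * x ^ 5 + 117648 * x ^ 3 + 50976 * x) ^ 2 -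
        (144 * x ^ 6 - 2268 * x ^ 4 - 3456 * x ^ 2 - 720) ^ 2 *
          (x ^ 6 - 12 * x ^ 4 + 756 * x ^ 2 + 480) =
        (x - 1) ^ 3 * (21337344000 + 100608998400 * (x-1) + 224932308480 * (x-1) ^ 2 +
          308234356992 * (x-1) ^ 3 + 282836883456 * (x-1) ^ 4 + 178737829632 * (x-1) ^ 5 +
          76983395328 * (x-1) ^ 6 + 21481542144 * (x-1) ^ 7 + 3553320960 * (x-1) ^ 8 +
          443294208 * (x-1) ^ 9 + 159376896 * (x-1) ^ 10 + 56173824 * (x-1) ^ 11 +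
          8957952 * (x-1) ^ 12 + 559872 * (x-1) ^ 13) := by ring
    rw [key]
    have h3 := pow_pos hy 3
    have hpos : (0:ℝ) < 21337344000 + 100608998400 * (x-1) + 224932308480 * (x-1) ^ 2 +
        308234356992 * (x-1) ^ 3 + 282836883456 * (x-1) ^ 4 + 178737829632 * (x-1) ^ 5 +
        76983395328 * (x-1) ^ 6 + 21481542144 * (x-1) ^ 7 + 3553320960 * (x-1) ^ 8 +
        443294208 * (x-1) ^ 9 + 159376896 * (x-1) ^ 10 + 56173824 * (x-1) ^ 11 +
        8957952 * (x-1) ^ 12 + 559872 * (x-1) ^ 13 := by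
      have h1 := pow_pos hy 1
      have h2 := pow_pos hy 2
      have h4 := pow_pos hy 4
      have h5 := pow_pos hy 5
      have h6 := pow_pos hy 6
      have h7 := pow_pos hy 7
      have h8 := pow_pos hy 8
      have h9 := pow_pos hy 9
      have h10 := pow_pos hy 10
      have h11 := pow_pos hy 11
      have h12 := pow_pos hy 12
      have h13 := pow_pos hy 13
      nlinarith [h1, h2, h3, h4, h5, h6, h7, h8, h9, h10, h11, h12, h13]
    positivity
  nlinarith [hD2, hP1, sq_nonneg ((144 * x ^ 9 - 1188 * x ^ 7 + 52920 * x ^ 5 + 117648 * x ^ 3 +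
    50976 * x) + (144 * x ^ 6 - 2268 * x ^ 4 - 3456 * x ^ 2 - 720) * qF x)]

lemma Gd_pos {x : ℝ} (hx : 1 < x) : 0 < Gd x := by
  have hs := sF_pos hx
  have hq := qF_pos x
  have h := PT_pos hx
  unfold Gd
  positivity

lemma GF_one : GF 1 = 0 := by
  simp [GF, sF_one, wF_one]

lemma GF_contOn : ContinuousOn GF (Set.Ici 1) := by
  unfold GF
  apply ContinuousOn.sub _ wF_contOn
  apply ContinuousOn.div
  · exact (((continuous_pow 2).sub continuous_const).mul sF_cont |>.mul
      (((continuous_pow 3).sub (continuous_const.mul continuous_id)).add qF_cont)).continuousOn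
  · exact ((continuous_const.mul (continuous_pow 2)).add continuous_const).continuousOn
  · intro y _; positivity

lemma GF_pos {x : ℝ} (hx : 1 < x) : 0 < GF x := by
  have hmono : StrictMonoOn GF (Set.Ici 1) := by
    apply strictMonoOn_of_deriv_pos (convex_Ici 1) GF_contOn
    intro y hy
    rw [interior_Ici] at hy
    rw [(hasDerivAt_GF hy).deriv]
    exact Gd_pos hy
  have := hmono Set.self_mem_Ici (Set.mem_Ici.2 hx.le) hx
  rwa [GF_one] at this

/-- The key inequality `D < 0`. -/
lemma D_neg {x : ℝ} (hx : 1 < x) :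
    (18 * x ^ 2 + 12) * wF x ^ 2 - (x ^ 3 - 6 * x) * ((x ^ 2 - 1) * sF x) * wF x -
      10 * ((x ^ 2 - 1) * sF x) ^ 2 < 0 := by
  have hs := sF_pos hx
  have hq := qF_pos x
  have hw := wF_pos hx
  have hs2 := sF_sq hx.le
  have hq2 := qF_sq x
  have hG := GF_pos hx
  have hden : (0:ℝ) < 36 * x ^ 2 + 24 := by positivity
  -- from GF > 0 : w * (36x^2+24) < (x^2-1) * s * (x^3-6x+q)
  have hstar : wF x * (36 * x ^ 2 + 24) < (x ^ 2 - 1) * sF x * (x ^ 3 - 6 * x + qF x) := by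
    have := GF_pos hx
    unfold GF at this
    rw [sub_pos, lt_div_iff₀ hden] at this
    linarith
  have ha : 0 < (x ^ 2 - 1) * sF x * (x ^ 3 - 6 * x + qF x) - wF x * (36 * x ^ 2 + 24) := by
    linarith
  -- q > x^3 - 6x  (since q^2 - (x^3-6x)^2 = 720 x^2 + 480 > 0)
  have hq3 : x ^ 3 - 6 * x < qF x := by
    nlinarith [hq2, hq, sq_nonneg (qF x - (x ^ 3 - 6 * x)), sq_nonneg x]
  have hB : 0 < (36 * x ^ 2 + 24) * wF x + (x ^ 2 - 1) * sF x * (qF x - (x ^ 3 - 6 * x)) := by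
    have h1 : 0 < (x ^ 2 - 1) * sF x := mul_pos (sq_sub_pos hx) hs
    nlinarith [mul_pos h1 (sub_pos.2 hq3), mul_pos hden hw]
  -- 2 * D * (36x^2+24) = - a * B
  nlinarith [mul_pos ha hB, hq2, hden]

lemma uF_pos {x : ℝ} (hx : 1 < x) : 0 < uF x :=
  Real.rpow_pos_of_pos (wF_pos hx) _

lemma uF_cube {x : ℝ} (hx : 1 < x) : uF x ^ 3 = wF x := by
  rw [uF, ← Real.rpow_natCast (wF x ^ ((1:ℝ)/3)) 3, ← Real.rpow_mul (wF_pos hx).le]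
  norm_num

lemma hasDerivAt_uF {x : ℝ} (hx : 1 < x) :
    HasDerivAt uF (1 / 2 * sF x / uF x ^ 2) x := by
  have hw := wF_pos hx
  have h := (hasDerivAt_wF hx).rpow_const (p := (1:ℝ)/3) (Or.inl hw.ne')
  refine h.congr_deriv (Eq.symm ?_)
  have h2 : wF x ^ ((1:ℝ)/3 - 1) = (uF x ^ 2)⁻¹ := by
    rw [show (1:ℝ)/3 - 1 = -(2/3) by norm_num, Real.rpow_neg hw.le]
    congr 1
    rw [uF, ← Real.rpow_natCast (wF x ^ ((1:ℝ)/3)) 2, ← Real.rpow_mul hw.le]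
    norm_num
  rw [h2]
  have hu := uF_pos hx
  field_simp

lemma hasDerivAt_fF {x : ℝ} (hx : 1 < x) :
    HasDerivAt fF
      (((18 * x ^ 2 + 12) * wF x ^ 2 - (x ^ 3 - 6 * x) * ((x ^ 2 - 1) * sF x) * wF x -
        10 * ((x ^ 2 - 1) * sF x) ^ 2) / (48 * (x ^ 2 - 1) ^ 2 * sF x * wF x ^ 2 * uF x)) x := by
  have hs := sF_pos hx
  have hw := wF_pos hx
  have hu := uF_pos hx
  have hs2 := sF_sq hx.le
  have hu3 := uF_cube hx
  have hx2 := sq_sub_pos hx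
  have hd1 : (24 * ((x ^ 2 - 1) * sF x * uF x) : ℝ) ≠ 0 := by positivity
  have hd2 : (48 * uF x ^ 4 : ℝ) ≠ 0 := by positivity
  have hNum : HasDerivAt (fun y : ℝ => y ^ 3 - 6 * y) (3 * x ^ 2 - 6) x := by
    have := (hasDerivAt_pow 3 x).sub ((hasDerivAt_id x).const_mul 6)
    refine this.congr_deriv (Eq.symm ?_); push_cast; ring
  have hDen1 : HasDerivAt (fun y : ℝ => 24 * ((y ^ 2 - 1) * sF y * uF y))
      (24 * (((2 * x * sF x + (x ^ 2 - 1) * (x / sF x)) * uF x) +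
        (x ^ 2 - 1) * sF x * (1 / 2 * sF x / uF x ^ 2))) x := by
    have h1 : HasDerivAt (fun y : ℝ => (y ^ 2 - 1) * sF y)
        (2 * x * sF x + (x ^ 2 - 1) * (x / sF x)) x := by
      have := (((hasDerivAt_pow 2 x).sub_const 1).mul (hasDerivAt_sF hx))
      refine this.congr_deriv (Eq.symm ?_); push_cast; ring
    exact ((h1.mul (hasDerivAt_uF hx)).const_mul 24)
  have hDen2 : HasDerivAt (fun y : ℝ => 48 * uF y ^ 4)
      (48 * (4 * uF x ^ 3 * (1 / 2 * sF x / uF x ^ 2))) x := by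
    have := ((hasDerivAt_uF hx).pow 4).const_mul (48:ℝ)
    refine this.congr_deriv (Eq.symm ?_) <;> (push_cast; ring)
  have h := (hNum.div hDen1 hd1).add ((hasDerivAt_const x (5:ℝ)).div hDen2 hd2)
  refine h.congr_deriv (Eq.symm ?_)
  field_simp
  linear_combination ((-480) * wF x^2 + (480) * uF x^6 + (480) * sF x^2 * wF x^2 + (-480) * sF x^2 * uF x^6 + (288) * x * sF x * uF x^3 * wF x^2 + (-288) * x * sF x * uF x^6 * wF x + (1440) * x^2 * wF x^2 + (-1440) * x^2 * uF x^6 + (576) * x^2 * uF x^6 * wF x^2 + (-960) * x^2 * sF x^2 * wF x^2 + (960) * x^2 * sF x^2 * uF x^6 + (-336) * x^3 * sF x * uF x^3 * wF x^2 + (336) * x^3 * sF x * uF x^6 * wF x + (-1440) * x^4 * wF x^2 + (1440) * x^4 * uF x^6 + (-96) * x^4 * uF x^6 * wF x^2 + (480) * x^4 * sF x^2 * wF x^2 + (-480) * x^4 * sF x^2 * uF x^6 + (48) * x^5 * sF x * uF x^3 * wF x^2 + (-48) * x^5 * sF x * uF x^6 * wF x + (480) * x^6 * wF x^2 + (-480)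 * x^6 * uF x^6) * hs2 + ((-480) * wF x + (-480) * uF x^3 + (288) * x * sF x * uF x^3 * wF x + (1920) * x^2 * wF x + (1920) * x^2 * uF x^3 + (-624) * x^3 * sF x * uF x^3 * wF x + (-2880) * x^4 * wF x + (-2880) * x^4 * uF x^3 + (384) * x^5 * sF x * uF x^3 * wF x + (1920) * x^6 * wF x + (1920) * x^6 * uF x^3 + (-48) * x^7 * sF x * uF x^3 * wF x + (-480) * x^8 * wF x + (-480) * x^8 * uF x^3) * hu3

lemma fF_strictAntiOn : StrictAntiOn fF (Set.Ioi (1:ℝ)) := by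
  apply strictAntiOn_of_deriv_neg (convex_Ioi 1)
  · exact fun y hy => (hasDerivAt_fF hy).continuousAt.continuousWithinAt
  · intro y hy
    rw [interior_Ioi] at hy
    rw [(hasDerivAt_fF hy).deriv]
    apply div_neg_of_neg_of_pos (D_neg hy)
    have hs := sF_pos hy
    have hw := wF_pos hy
    have hu := uF_pos hy
    have hx2 := sq_sub_pos hy
    positivity

lemma neg_b0_eq {x : ℝ} (hx : 1 < x) : -b0 x = fF x := by
  have hw := wF_pos hx
  have hu := uF_pos hx
  have hs := sF_pos hx
  have hx2 := sq_sub_pos hx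
  have hu3 := uF_cube hx
  have hzeta : zeta x = wF x ^ ((2:ℝ)/3) := rfl
  have hb : -b0 x = (1 / (2 * zeta x ^ ((1:ℝ)/2))) *
      (x * (x ^ 2 - 6) / (12 * (x ^ 2 - 1) ^ ((3:ℝ)/2)) +
        5 / (24 * zeta x ^ ((3:ℝ)/2))) := by
    unfold b0; ring
  have h12 : zeta x ^ ((1:ℝ)/2) = uF x := by
    rw [hzeta, ← Real.rpow_mul hw.le, uF]; norm_num
  have h32 : zeta x ^ ((3:ℝ)/2) = wF x := by
    rw [hzeta, ← Real.rpow_mul hw.le]; norm_num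
  have h32' : (x ^ 2 - 1 : ℝ) ^ ((3:ℝ)/2) = (x ^ 2 - 1) * sF x := by
    rw [show ((3:ℝ)/2) = 1 + 1/2 by norm_num, Real.rpow_add hx2, Real.rpow_one,
      ← Real.sqrt_eq_rpow]
    rfl
  rw [hb, h12, h32, h32', fF, ← hu3]
  field_simp
  ring

lemma sF_ge_half {x : ℝ} (hx : 2 ≤ x) : x / 2 ≤ sF x := by
  have h : (x/2)^2 ≤ x^2 - 1 := by nlinarith
  calc x/2 = Real.sqrt ((x/2)^2) := by
        rw [Real.sqrt_sq (by linarith)]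
    _ ≤ sF x := Real.sqrt_le_sqrt h

lemma sF_le {x : ℝ} (hx : 1 ≤ x) : sF x ≤ x := by
  have : sF x ≤ Real.sqrt (x^2) := Real.sqrt_le_sqrt (by nlinarith)
  rwa [Real.sqrt_sq (by linarith)] at this

lemma arcosh_lt {x : ℝ} (hx : 1 ≤ x) : _root_.arcosh x < 2 * x := by
  have h1 := xs_pos hx
  have h2 : _root_.arcosh x ≤ x + Real.sqrt (x^2-1) - 1 := Real.log_le_sub_one_of_pos h1
  have h3 : Real.sqrt (x^2-1) ≤ x := sF_le hx
  unfold sF at h3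
  have h0 : (0:ℝ) < x := by linarith
  linarith

lemma wF_lower {x : ℝ} (hx : 8 ≤ x) : 3 / 16 * x ^ 2 ≤ wF x := by
  have h2 : (2:ℝ) ≤ x := by linarith
  have h1 : (1:ℝ) ≤ x := by linarith
  have hs := sF_ge_half h2
  have hA := arcosh_lt h1
  have hxs : x * (x/2) ≤ x * sF x := by nlinarith
  unfold wF
  nlinarith

lemma uF_tendsto : Tendsto uF atTop atTop := by
  have hw : Tendsto wF atTop atTop := by
    apply tendsto_atTop_mono' atTop ?_
      (Tendsto.const_mul_atTop (by norm_num : (0:ℝ) < 3/16)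
        (tendsto_pow_atTop (two_ne_zero)))
    filter_upwards [eventually_ge_atTop (8:ℝ)] with x hx
    exact wF_lower hx
  exact (tendsto_rpow_atTop (by norm_num : (0:ℝ) < 1/3)).comp hw

lemma fF_tendsto_zero : Tendsto fF atTop (nhds 0) := by
  have hu := uF_tendsto
  apply tendsto_of_tendsto_of_tendsto_of_le_of_le' (g := fun _ => (0:ℝ))
    (h := fun x => (31/144) * (uF x)⁻¹) tendsto_const_nhds
  · have : Tendsto (fun x => (uF x)⁻¹) atTop (nhds 0) :=
      tendsto_inv_atTop_zero.comp hu
    have h2 := this.const_mul (31/144 : ℝ)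
    simpa using h2
  · filter_upwards [eventually_ge_atTop (8:ℝ), hu.eventually_ge_atTop 1] with x hx hux
    have hx1 : (1:ℝ) < x := by linarith
    have hs := sF_pos hx1
    have hupos := uF_pos hx1
    have hx2 := sq_sub_pos hx1
    unfold fF
    have t1 : 0 ≤ (x ^ 3 - 6 * x) / (24 * ((x ^ 2 - 1) * sF x * uF x)) := by
      apply div_nonneg (by nlinarith) (by positivity)
    have t2 : 0 ≤ 5 / (48 * uF x ^ 4) := by positivity
    linarith
  · filter_upwards [eventually_ge_atTop (8:ℝ), hu.eventually_ge_atTop 1] with x hx hux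
    have hx1 : (1:ℝ) < x := by linarith
    have hs := sF_pos hx1
    have hupos := uF_pos hx1
    have hx2 := sq_sub_pos hx1
    have hsx := sF_ge_half (by linarith : (2:ℝ) ≤ x)
    unfold fF
    have t1 : (x ^ 3 - 6 * x) / (24 * ((x ^ 2 - 1) * sF x * uF x)) ≤ 1/9 * (uF x)⁻¹ := by
      rw [div_le_iff₀ (by positivity)]
      have key : 0 ≤ 24 * (x ^ 2 - 1) * sF x - 9 * (x ^ 3 - 6 * x) := by
        nlinarith [mul_nonneg (sub_nonneg.2 hsx) hx2.le]
      have heq : 1/9 * (uF x)⁻¹ * (24 * ((x ^ 2 - 1) * sF x * uF x)) =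
          8/3 * ((x ^ 2 - 1) * sF x) := by
        field_simp; ring
      rw [heq]
      linarith
    have t2 : 5 / (48 * uF x ^ 4) ≤ 5/48 * (uF x)⁻¹ := by
      rw [div_le_iff₀ (by positivity)]
      have heq : 5/48 * (uF x)⁻¹ * (48 * uF x ^ 4) = 5 * uF x ^ 3 := by
        field_simp
      rw [heq]
      nlinarith [hux, sq_nonneg (uF x - 1), sq_nonneg (uF x + 1)]
    linarith

theorem neg_b0_strictAnti_and_tendsto_zero :
    StrictAntiOn (fun x : ℝ => -b0 x) (Set.Ioi (1 : ℝ)) ∧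
      Tendsto (fun x : ℝ => -b0 x) atTop (nhds 0) := by
  constructor
  · intro a ha b hb hab
    simp only
    rw [neg_b0_eq (Set.mem_Ioi.1 ha), neg_b0_eq (Set.mem_Ioi.1 hb)]
    exact fF_strictAntiOn ha hb hab
  · apply fF_tendsto_zero.congr'
    filter_upwards [eventually_gt_atTop (1:ℝ)] with x hx
    exact (neg_b0_eq hx).symm
end
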